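/- arXiv:1103.5126 — 2 statements merged into one kernel-verified Lean document; each statement's English description precedes it below -/
import Mathlib

section
/- For each positive integer $l$, each $M \ge 0$ and each constant $K$, and for a function $g: \mathbb{C}^l \to \mathbb{C}$ holomorphic on $\{\lambda : \mathrm{Re}\,\lambda_j > -\delta \text{ for all } j\}$ satisfying $|g(\lambda)| \le K\prod_{j=1}^l (1+|\lambda_j|)^M e^{(A-\pi)|\mathrm{Im}\,\lambda_j| + (R - P)\mathrm{Re}\,\lambda_j}$ with $A < \pi$ and $R < P$, the following holds: the limit as $N \to \infty$ of the iterated contour integral of $g$ over the product of rectangles $C_{j,N}$ (each $C_{j,N}$ being the clockwise boundary of the rectangle with vertices $-iN$, $iN$, $iN + (\rho_j + N + 1/2)$, $-iN + (\rho_j + N + 1/2)$) equals the iterated integral of $g$ over $(i\mathbb{R})^l$, i.e. $\lim_{N\to\infty}\oint_{C_{1,N}}\cdots\oint_{C_{l,N}} g(\lambda)\,d\lambda = \int_{i\mathbb{R}}\cdots\int_{i\mathbb{R}} g(\lambda)\,d\lambda$, provided the estimate holds on the union of the contours and on the imaginary axes. -/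
open Complex Real MeasureTheory

/-- The (counterclockwise) contour integral of `f` over the boundary of the axis-parallel
rectangle with lower-left corner `z` and upper-right corner `w`. -/
noncomputable def rectIntegral (f : ℂ → ℂ) (z w : ℂ) : ℂ :=
  (∫ x : ℝ in z.re..w.re, f (x + z.im * Complex.I)) +
    Complex.I * (∫ y : ℝ in z.im..w.im, f (w.re + y * Complex.I)) -
    (∫ x : ℝ in z.re..w.re, f (x + w.im * Complex.I)) -
    Complex.I * (∫ y : ℝ in z.im..w.im, f (z.re + y * Complex.I))

/-- Iterated (counterclockwise) rectangular contour integral of a function of `n` complex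
variables, variable `j` running over the boundary of the rectangle with corners `c j`. -/
noncomputable def iterRect : (n : ℕ) → ((Fin n → ℂ) → ℂ) → (Fin n → ℂ × ℂ) → ℂ
  | 0, g, _ => g (fun i => i.elim0)
  | n + 1, g, c =>
      rectIntegral (fun z => iterRect n (fun v => g (Fin.cons z v)) (fun i => c i.succ))
        (c 0).1 (c 0).2


section ContourShiftAux
open Filter Set

lemma aux_bdd (M b : ℝ) (hb : 0 < b) :
    ∃ D : ℝ, 0 ≤ D ∧ ∀ u : ℝ, 0 ≤ u → (1 + u) ^ M * Real.exp (-b * u) ≤ D := by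
  have h0 : Tendsto (fun u : ℝ => (1 + u) ^ M * Real.exp (-b * u)) atTop (nhds 0) := by
    have h1 := (tendsto_rpow_mul_exp_neg_mul_atTop_nhds_zero M b hb).comp
      (tendsto_atTop_add_const_left atTop 1 tendsto_id)
    have h2 := h1.mul_const (Real.exp b)
    rw [zero_mul] at h2
    refine h2.congr fun u => ?_
    simp only [Function.comp_apply, id_eq]
    rw [mul_assoc, ← Real.exp_add]
    ring_nf
  obtain ⟨u₀, hu₀⟩ := (Filter.eventually_atTop).mp (h0.eventually_lt_const one_pos)
  have hcont : ContinuousOn (fun u : ℝ => (1 + u) ^ M * Real.exp (-b * u)) (Icc 0 u₀) := by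
    refine ContinuousOn.mul ?_ (Real.continuous_exp.comp (continuous_const.mul continuous_id)).continuousOn
    refine ContinuousOn.rpow_const (continuous_const.add continuous_id).continuousOn ?_
    intro x hx
    exact Or.inl (by nlinarith [hx.1])
  obtain ⟨D₀, hD₀⟩ := isCompact_Icc.exists_bound_of_continuousOn hcont
  refine ⟨max D₀ 1, le_trans zero_le_one (le_max_right _ _), fun u hu => ?_⟩
  rcases le_or_gt u u₀ with h | h
  · have := hD₀ u ⟨hu, h⟩
    rw [Real.norm_eq_abs] at this
    exact le_trans (le_trans (le_abs_self _) this) (le_max_left _ _)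
  · exact le_trans (hu₀ u h.le).le (le_max_right _ _)

lemma aux_exp_abs_integrable {b : ℝ} (hb : 0 < b) :
    Integrable (fun t : ℝ => Real.exp (-b * |t|)) := by
  rw [← integrableOn_univ, ← Set.Iio_union_Ici (a := (0:ℝ)), integrableOn_union,
    integrableOn_Ici_iff_integrableOn_Ioi]
  constructor
  · rw [← (Measure.measurePreserving_neg (volume : Measure ℝ)).integrableOn_comp_preimage
        (Homeomorph.neg ℝ).measurableEmbedding]
    simp only [Function.comp_def, abs_neg, neg_preimage, neg_Iio, neg_zero]
    exact (exp_neg_integrableOn_Ioi 0 hb).congr_fun (fun x hx => by rw [abs_of_pos hx]) measurableSet_Ioi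
  · exact (exp_neg_integrableOn_Ioi 0 hb).congr_fun (fun x hx => by rw [abs_of_pos hx]) measurableSet_Ioi

lemma aux_majorant_integrable (M b : ℝ) (hb : 0 < b) :
    Integrable (fun t : ℝ => (1 + |t|) ^ M * Real.exp (-b * |t|)) := by
  obtain ⟨D, hD0, hD⟩ := aux_bdd M (b/2) (by positivity)
  have hmeas : AEStronglyMeasurable (fun t : ℝ => (1 + |t|) ^ M * Real.exp (-b * |t|)) volume := by
    apply Continuous.aestronglyMeasurable
    refine Continuous.mul ?_ (Real.continuous_exp.comp (continuous_const.mul continuous_abs))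
    refine Continuous.rpow_const (continuous_const.add continuous_abs) fun x => Or.inl (by positivity)
  refine Integrable.mono' ((aux_exp_abs_integrable (b := b/2) (by positivity)).const_mul D) hmeas ?_
  filter_upwards with t
  rw [Real.norm_eq_abs, _root_.abs_of_nonneg (by positivity)]
  have h1 : (1 + |t|) ^ M * Real.exp (-(b/2) * |t|) ≤ D := hD |t| (abs_nonneg t)
  calc (1 + |t|) ^ M * Real.exp (-b * |t|)
      = ((1 + |t|) ^ M * Real.exp (-(b/2) * |t|)) * Real.exp (-(b/2) * |t|) := by
        rw [mul_assoc, ← Real.exp_add]; ring_nf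
    _ ≤ D * Real.exp (-(b/2) * |t|) :=
        mul_le_mul_of_nonneg_right h1 (Real.exp_pos _).le


lemma rectIntegral_eq_zero {f : ℂ → ℂ} {z w : ℂ} {δ : ℝ}
    (hz : -δ < z.re) (hw : -δ < w.re)
    (hf : DifferentiableOn ℂ f {p : ℂ | -δ < p.re}) :
    rectIntegral f z w = 0 := by
  have H := Complex.integral_boundary_rect_eq_zero_of_differentiableOn f z w
    (hf.mono ?_)
  · simp only [smul_eq_mul] at H
    unfold rectIntegral
    linear_combination H
  · rintro p hp
    rw [Complex.mem_reProdIm] at hp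
    show -δ < p.re
    rcases Set.mem_uIcc.mp hp.1 with h | h <;> linarith [h.1]

lemma rectIntegral_eq_zero_of_vanish {f : ℂ → ℂ} {z w : ℂ}
    (h : ∀ p : ℂ, p.re ∈ Set.uIcc z.re w.re → p.im ∈ Set.uIcc z.im w.im → f p = 0) :
    rectIntegral f z w = 0 := by
  have e1 : (∫ x : ℝ in z.re..w.re, f (x + z.im * Complex.I)) = 0 := by
    rw [intervalIntegral.integral_congr (g := fun _ => (0:ℂ)) (fun x hx => by
      refine h _ ?_ ?_ <;> simp [hx, Set.left_mem_uIcc])]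
    simp
  have e2 : (∫ x : ℝ in z.re..w.re, f (x + w.im * Complex.I)) = 0 := by
    rw [intervalIntegral.integral_congr (g := fun _ => (0:ℂ)) (fun x hx => by
      refine h _ ?_ ?_ <;> simp [hx, Set.right_mem_uIcc])]
    simp
  have e3 : (∫ y : ℝ in z.im..w.im, f (w.re + y * Complex.I)) = 0 := by
    rw [intervalIntegral.integral_congr (g := fun _ => (0:ℂ)) (fun y hy => by
      refine h _ ?_ ?_ <;> simp [hy, Set.right_mem_uIcc])]
    simp
  have e4 : (∫ y : ℝ in z.im..w.im, f (z.re + y * Complex.I)) = 0 := by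
    rw [intervalIntegral.integral_congr (g := fun _ => (0:ℂ)) (fun y hy => by
      refine h _ ?_ ?_ <;> simp [hy, Set.left_mem_uIcc])]
    simp
  unfold rectIntegral
  rw [e1, e2, e3, e4]
  ring

lemma diff_cons_outer {n : ℕ} {δ : ℝ} {g : (Fin (n+1) → ℂ) → ℂ}
    (hg : DifferentiableOn ℂ g {lam : Fin (n+1) → ℂ | ∀ j, -δ < (lam j).re})
    (v : Fin n → ℂ) (hv : ∀ j, -δ < (v j).re) :
    DifferentiableOn ℂ (fun z => g (Fin.cons z v)) {z : ℂ | -δ < z.re} := by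
  have hd : Differentiable ℂ (fun z : ℂ => (Fin.cons z v : Fin (n+1) → ℂ)) := by
    rw [differentiable_pi]
    intro i
    refine Fin.cases ?_ ?_ i
    · simpa using differentiable_id
    · intro j; simpa using differentiable_const (v j)
  refine hg.comp hd.differentiableOn ?_
  intro z hz j
  refine Fin.cases ?_ ?_ j
  · simpa using hz
  · intro j; simpa using hv j

lemma diff_cons_inner {n : ℕ} {δ : ℝ} {g : (Fin (n+1) → ℂ) → ℂ}
    (hg : DifferentiableOn ℂ g {lam : Fin (n+1) → ℂ | ∀ j, -δ < (lam j).re})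
    (z : ℂ) (hz : -δ < z.re) :
    DifferentiableOn ℂ (fun v => g (Fin.cons z v))
      {v : Fin n → ℂ | ∀ j, -δ < (v j).re} := by
  have hd : Differentiable ℂ (fun v : Fin n → ℂ => (Fin.cons z v : Fin (n+1) → ℂ)) := by
    rw [differentiable_pi]
    intro i
    refine Fin.cases ?_ ?_ i
    · simpa using differentiable_const z
    · intro j
      simp only [Fin.cons_succ]
      exact differentiable_pi.mp differentiable_id j
  refine hg.comp hd.differentiableOn ?_
  intro v hv j
  refine Fin.cases ?_ ?_ j
  · simpa using hz
  · intro j; simpa using hv j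

lemma iterRect_eq_zero {δ : ℝ} :
    ∀ (n : ℕ) (g : (Fin (n+1) → ℂ) → ℂ) (c : Fin (n+1) → ℂ × ℂ),
    DifferentiableOn ℂ g {lam : Fin (n+1) → ℂ | ∀ j, -δ < (lam j).re} →
    (∀ j, -δ < (c j).1.re) → (∀ j, -δ < (c j).2.re) →
    iterRect (n+1) g c = 0 := by
  intro n
  induction n with
  | zero =>
    intro g c hg h1 h2
    show rectIntegral _ (c 0).1 (c 0).2 = 0
    refine rectIntegral_eq_zero (h1 0) (h2 0) ?_
    have : (fun z => iterRect 0 (fun v => g (Fin.cons z v)) (fun i => c i.succ)) =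
        fun z => g (Fin.cons z (fun i => i.elim0)) := rfl
    rw [this]
    exact diff_cons_outer hg _ (fun j => j.elim0)
  | succ n ih =>
    intro g c hg h1 h2
    show rectIntegral _ (c 0).1 (c 0).2 = 0
    refine rectIntegral_eq_zero_of_vanish ?_
    intro p hre him
    have hp : -δ < p.re := by
      rcases Set.mem_uIcc.mp hre with h | h <;> linarith [h.1, h1 0, h2 0]
    exact ih (fun v => g (Fin.cons p v)) (fun i => c i.succ)
      (diff_cons_inner hg p hp) (fun j => h1 _) (fun j => h2 _)


lemma oneD (M A R P δ : ℝ) (hM : 0 ≤ M) (hA : A < Real.pi) (hRP : R < P) (hδ : 0 < δ)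
    (f : ℂ → ℂ) (C : ℝ)
    (hf : DifferentiableOn ℂ f {z : ℂ | -δ < z.re})
    (hb : ∀ z : ℂ, 0 ≤ z.re → ‖f z‖ ≤ C * (1 + ‖z‖) ^ M *
      Real.exp ((A - Real.pi) * |z.im| + (R - P) * z.re)) :
    ∫ t : ℝ, f ((t : ℂ) * Complex.I) = 0 := by
  have hπA : 0 < Real.pi - A := by linarith
  have hC : 0 ≤ C := by
    have h := hb 0 (by simp)
    simp only [map_zero, norm_zero, add_zero, Real.one_rpow, Complex.zero_re, Complex.zero_im, abs_zero,
      mul_zero, zero_add, Real.exp_zero, mul_one] at h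
    exact (norm_nonneg _).trans h
  -- master pointwise bound on vertical lines
  have hbd : ∀ c t : ℝ, 0 ≤ c → ‖f ((c:ℂ) + t * I)‖ ≤
      (C * (1 + c) ^ M * Real.exp ((R - P) * c)) *
        ((1 + |t|) ^ M * Real.exp (-(Real.pi - A) * |t|)) := by
    intro c t hc
    have h1 := hb ((c:ℂ) + t * I) (by simp [hc])
    have hre : ((c:ℂ) + t * I).re = c := by simp
    have him : ((c:ℂ) + t * I).im = t := by simp
    rw [hre, him] at h1
    refine h1.trans ?_
    have habs : ‖(c:ℂ) + t * I‖ ≤ c + |t| := by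
      refine (Complex.norm_le_abs_re_add_abs_im _).trans ?_
      rw [hre, him, _root_.abs_of_nonneg hc]
    have hpow : (1 + ‖(c:ℂ) + t*I‖) ^ M ≤ ((1+c)*(1+|t|)) ^ M := by
      refine Real.rpow_le_rpow (by positivity) ?_ hM
      nlinarith [abs_nonneg t]
    rw [Real.mul_rpow (by positivity) (by positivity)] at hpow
    have key : C * (1 + ‖(c:ℂ)+t*I‖) ^ M ≤ C * ((1+c)^M * (1+|t|)^M) :=
      mul_le_mul_of_nonneg_left hpow hC
    calc C * (1 + ‖(c:ℂ)+t*I‖) ^ M * Real.exp ((A-Real.pi)*|t| + (R-P)*c)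
        ≤ C * ((1+c)^M * (1+|t|)^M) * Real.exp ((A-Real.pi)*|t| + (R-P)*c) :=
          mul_le_mul_of_nonneg_right key (Real.exp_pos _).le
      _ = (C * (1 + c) ^ M * Real.exp ((R - P) * c)) *
          ((1 + |t|) ^ M * Real.exp (-(Real.pi - A) * |t|)) := by
          rw [show (A-Real.pi)*|t| + (R-P)*c = (-(Real.pi-A))*|t| + (R-P)*c by ring,
            Real.exp_add]
          ring
  set ψ : ℝ → ℝ := fun t => (1+|t|)^M * Real.exp (-(Real.pi - A)*|t|) with hψ
  have hψint : Integrable ψ := aux_majorant_integrable M (Real.pi - A) hπA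
  have hcont : ∀ c : ℝ, 0 ≤ c → Continuous fun t : ℝ => f ((c:ℂ) + t * I) := by
    intro c hc
    refine hf.continuousOn.comp_continuous (by continuity) fun t => ?_
    simp only [Set.mem_setOf_eq, Complex.add_re, Complex.ofReal_re, Complex.mul_re,
      Complex.ofReal_im, Complex.I_re, Complex.I_im, mul_zero, mul_one, zero_mul, sub_zero]
    linarith
  have hint : ∀ c : ℝ, 0 ≤ c → Integrable fun t : ℝ => f ((c:ℂ) + t * I) := by
    intro c hc
    refine (hψint.const_mul (C * (1 + c) ^ M * Real.exp ((R - P) * c))).mono'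
      (hcont c hc).aestronglyMeasurable ?_
    filter_upwards with t using hbd c t hc
  have hint0 : Integrable fun t : ℝ => f ((t:ℂ) * I) := by
    have := hint 0 le_rfl
    simpa using this
  set V : ℝ → ℂ := fun c => ∫ t : ℝ, f ((c:ℂ) + t * I) with hVdef
  set V0 : ℂ := ∫ t : ℝ, f ((t:ℂ) * I) with hV0def
  -- horizontal integrals tend to zero
  have hhor : ∀ (c : ℝ), 0 ≤ c → ∀ (s : ℝ → ℝ), (∀ T, 0 ≤ T → |s T| = T) →
      Tendsto (fun T : ℝ => ∫ x : ℝ in (0:ℝ)..c, f ((x:ℂ) + (s T : ℂ) * I)) atTop (nhds 0) := by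
    intro c hc s hs
    have hB : Tendsto (fun T : ℝ => (C * (1+c+T)^M * Real.exp ((A-Real.pi)*T)) * |c - 0|)
        atTop (nhds 0) := by
      have h1 := (tendsto_rpow_mul_exp_neg_mul_atTop_nhds_zero M (Real.pi - A) hπA).comp
        (tendsto_atTop_add_const_left atTop (1+c) tendsto_id)
      have h2 := (h1.const_mul (C * Real.exp ((Real.pi - A)*(1+c)))).mul_const (|c - 0|)
      rw [mul_zero, zero_mul] at h2
      refine h2.congr fun T => ?_
      simp only [Function.comp_apply, id_eq]
      have : Real.exp ((A-Real.pi)*T)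
          = Real.exp (-(Real.pi-A)*(1+c+T)) * Real.exp ((Real.pi-A)*(1+c)) := by
        rw [← Real.exp_add]; congr 1; ring
      rw [this]; ring
    refine squeeze_zero_norm' ?_ hB
    filter_upwards [eventually_ge_atTop (0:ℝ)] with T hT
    refine intervalIntegral.norm_integral_le_of_norm_le_const fun x hx => ?_
    have hx' : x ∈ Set.Ioc 0 c := by rwa [Set.uIoc_of_le hc] at hx
    have h1 := hb ((x:ℂ) + (s T : ℂ) * I) (by simp [hx'.1.le])
    have hre : ((x:ℂ) + (s T:ℂ) * I).re = x := by simp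
    have him : ((x:ℂ) + (s T:ℂ) * I).im = s T := by simp
    rw [hre, him] at h1
    refine h1.trans ?_
    have habs : ‖(x:ℂ) + (s T:ℂ) * I‖ ≤ c + T := by
      refine (Complex.norm_le_abs_re_add_abs_im _).trans ?_
      rw [hre, him, _root_.abs_of_nonneg hx'.1.le, hs T hT]
      linarith [hx'.2]
    have hpow : (1 + ‖(x:ℂ) + (s T:ℂ)*I‖) ^ M ≤ (1+c+T) ^ M := by
      refine Real.rpow_le_rpow (by positivity) (by linarith) hM
    have hexp : Real.exp ((A - Real.pi) * |s T| + (R - P) * x) ≤ Real.exp ((A-Real.pi)*T) := by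
      rw [hs T hT]
      refine Real.exp_le_exp.mpr ?_
      nlinarith [hx'.1.le]
    exact mul_le_mul (mul_le_mul_of_nonneg_left hpow hC) hexp (Real.exp_pos _).le
      (by positivity)
  -- contour shift: V c = V0 for c ≥ 0
  have stepA : ∀ c : ℝ, 0 ≤ c → V c = V0 := by
    intro c hc
    have cauchy : ∀ T : ℝ,
        (((∫ x : ℝ in (0:ℝ)..c, f ((x:ℂ) + -((T:ℂ) * I))) -
          ∫ x : ℝ in (0:ℝ)..c, f ((x:ℂ) + (T:ℂ) * I)) +
          Complex.I * ∫ y : ℝ in (-T)..T, f ((c:ℂ) + (y:ℂ) * I)) -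
          Complex.I * ∫ y : ℝ in (-T)..T, f ((y:ℂ) * I) = 0 := by
      intro T
      have H := Complex.integral_boundary_rect_eq_zero_of_differentiableOn f
        (-(T:ℂ)*I) ((c:ℂ)+T*I) (hf.mono ?_)
      · simp only [Complex.neg_re, Complex.mul_re, Complex.ofReal_re, Complex.I_re,
          Complex.ofReal_im, Complex.I_im, Complex.neg_im, Complex.mul_im, Complex.add_re,
          Complex.add_im, smul_eq_mul] at H
        norm_num at H
        exact H
      · rintro p hp
        rw [Complex.mem_reProdIm] at hp
        have h1 := hp.1
        have hminre : (-(T:ℂ)*I).re = 0 := by simp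
        have hmaxre : ((c:ℂ)+T*I).re = c := by simp
        rw [hminre, hmaxre, Set.uIcc_of_le hc] at h1
        show -δ < p.re
        linarith [h1.1]
    have hvertc : Tendsto (fun T : ℝ => Complex.I * ∫ y : ℝ in (-T)..T, f ((c:ℂ) + (y:ℂ) * I))
        atTop (nhds (Complex.I * V c)) := by
      exact (intervalIntegral_tendsto_integral (hint c hc) tendsto_neg_atTop_atBot
        tendsto_id).const_mul _
    have hvert0 : Tendsto (fun T : ℝ => Complex.I * ∫ y : ℝ in (-T)..T, f ((y:ℂ) * I))
        atTop (nhds (Complex.I * V0)) := by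
      exact (intervalIntegral_tendsto_integral hint0 tendsto_neg_atTop_atBot
        tendsto_id).const_mul _
    have hh1 := hhor c hc (fun T => -T) (fun T hT => by rw [abs_neg, _root_.abs_of_nonneg hT])
    have hh2 := hhor c hc (fun T => T) (fun T hT => _root_.abs_of_nonneg hT)
    simp only [Complex.ofReal_neg, neg_mul] at hh1
    have hRHS : Tendsto (fun T : ℝ =>
        (((∫ x : ℝ in (0:ℝ)..c, f ((x:ℂ) + -((T:ℂ) * I))) -
          ∫ x : ℝ in (0:ℝ)..c, f ((x:ℂ) + (T:ℂ) * I)) +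
          Complex.I * ∫ y : ℝ in (-T)..T, f ((c:ℂ) + (y:ℂ) * I)) -
          Complex.I * ∫ y : ℝ in (-T)..T, f ((y:ℂ) * I)) atTop
        (nhds (((0 - 0) + Complex.I * V c) - Complex.I * V0)) :=
      (((hh1.sub hh2).add hvertc).sub hvert0)
    have hzero : Tendsto (fun _ : ℝ => (0:ℂ)) atTop (nhds 0) := tendsto_const_nhds
    have h3 := hzero.congr (fun T => (cauchy T).symm)
    have h4 := tendsto_nhds_unique hRHS h3
    have h0 : Complex.I * V c = Complex.I * V0 := by linear_combination h4
    exact mul_left_cancel₀ Complex.I_ne_zero h0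
  -- V c tends to 0 as c → ∞
  have hJ : 0 ≤ ∫ t : ℝ, ψ t := integral_nonneg fun t => by positivity
  have hnormV : ∀ c : ℝ, 0 ≤ c →
      ‖V c‖ ≤ (C * (1+c)^M * Real.exp ((R-P)*c)) * ∫ t : ℝ, ψ t := by
    intro c hc
    have h := norm_integral_le_of_norm_le (hψint.const_mul (C*(1+c)^M*Real.exp ((R-P)*c)))
      (ae_of_all _ fun t => hbd c t hc)
    rwa [MeasureTheory.integral_const_mul] at h
  have hVtend : Tendsto V atTop (nhds 0) := by
    have hB : Tendsto (fun c : ℝ => (C * (1+c)^M * Real.exp ((R-P)*c)) * ∫ t : ℝ, ψ t)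
        atTop (nhds 0) := by
      have h1 := (tendsto_rpow_mul_exp_neg_mul_atTop_nhds_zero M (P - R) (by linarith)).comp
        (tendsto_atTop_add_const_left atTop 1 tendsto_id)
      have h2 := (h1.const_mul (C * Real.exp ((P - R)))).mul_const (∫ t : ℝ, ψ t)
      rw [mul_zero, zero_mul] at h2
      refine h2.congr fun c => ?_
      simp only [Function.comp_apply, id_eq]
      have : Real.exp ((R-P)*c) = Real.exp (-(P-R)*(1+c)) * Real.exp (P-R) := by
        rw [← Real.exp_add]; congr 1; ring
      rw [this]; ring
    refine squeeze_zero_norm' ?_ hB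
    filter_upwards [eventually_ge_atTop (0:ℝ)] with c hc using hnormV c hc
  have hconst : Tendsto (fun _ : ℝ => V0) atTop (nhds (0:ℂ)) := by
    refine hVtend.congr' ?_
    filter_upwards [eventually_ge_atTop (0:ℝ)] with c hc using stepA c hc
  exact tendsto_nhds_unique tendsto_const_nhds hconst


lemma integral_multi_zero (k : ℕ) (M A R P δ K : ℝ) (hM : 0 ≤ M) (hA : A < Real.pi)
    (hRP : R < P) (hδ : 0 < δ)
    (g : (Fin (k+1) → ℂ) → ℂ)
    (hg : DifferentiableOn ℂ g {lam : Fin (k+1) → ℂ | ∀ j, -δ < (lam j).re})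
    (hbound : ∀ lam : Fin (k+1) → ℂ, (∀ j, 0 ≤ (lam j).re) →
      ‖g lam‖ ≤ K * ∏ j, (1 + ‖lam j‖) ^ M *
        Real.exp ((A - Real.pi) * |(lam j).im| + (R - P) * (lam j).re)) :
    ∫ y : Fin (k+1) → ℝ, g (fun j => (y j : ℂ) * Complex.I) = 0 := by
  set F : (Fin (k+1) → ℝ) → ℂ := fun y => g (fun j => (y j : ℂ) * Complex.I) with hF
  have inner0 : ∀ v : Fin k → ℝ,
      (∫ x : ℝ, g (Fin.cons ((x:ℂ) * Complex.I) (fun j => ((v j : ℂ)) * Complex.I))) = 0 := by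
    intro v
    refine oneD M A R P δ hM hA hRP hδ
      (fun z => g (Fin.cons z (fun j => ((v j : ℂ)) * Complex.I)))
      (K * ∏ j : Fin k, (1 + |v j|) ^ M * Real.exp ((A - Real.pi) * |v j|)) ?_ ?_
    · refine diff_cons_outer hg _ (fun j => ?_)
      simp only [Complex.mul_re, Complex.ofReal_re, Complex.I_re, Complex.ofReal_im,
        Complex.I_im, mul_zero, mul_one, zero_mul, sub_zero, zero_sub, mul_comm]
      simpa using hδ
    · intro z hz
      have h := hbound (Fin.cons z (fun j => ((v j : ℂ)) * Complex.I)) ?_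
      · rw [Fin.prod_univ_succ] at h
        simp only [Fin.cons_zero, Fin.cons_succ] at h
        refine h.trans_eq ?_
        have hprod : ∀ j : Fin k,
            (1 + ‖(v j : ℂ) * Complex.I‖) ^ M *
              Real.exp ((A - Real.pi) * |((v j : ℂ) * Complex.I).im| +
                (R - P) * ((v j : ℂ) * Complex.I).re)
            = (1 + |v j|) ^ M * Real.exp ((A - Real.pi) * |v j|) := by
          intro j
          simp [Complex.mul_re, Complex.mul_im, Complex.norm_def, Complex.normSq_apply,
            Real.sqrt_mul_self_eq_abs]
        rw [Finset.prod_congr rfl (fun j _ => hprod j)]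
        ring
      · intro j
        refine Fin.cases ?_ ?_ j
        · simpa using hz
        · intro j
          simp [Complex.mul_re]
  have hcons : ∀ (x : ℝ) (v : Fin k → ℝ),
      (fun j => (((Fin.cons x v : Fin (k+1) → ℝ) j : ℝ) : ℂ) * Complex.I) =
        Fin.cons ((x:ℂ) * Complex.I) (fun j => ((v j : ℂ)) * Complex.I) := by
    intro x v; funext j
    refine Fin.cases ?_ ?_ j <;> simp
  by_cases hInt : Integrable F
  · set e := MeasurableEquiv.piFinSuccAbove (fun _ : Fin (k+1) => ℝ) 0 with he
    have hmp := (measurePreserving_piFinSuccAbove (fun _ : Fin (k+1) => (volume : Measure ℝ)) 0).symm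
    have hemb := e.symm.measurableEmbedding
    have hIntpi : Integrable F (Measure.pi fun _ => volume) := by
      rwa [← MeasureTheory.volume_pi]
    have key := hmp.integral_comp hemb F
    have hIntc : Integrable (F ∘ e.symm)
        ((volume : Measure ℝ).prod (Measure.pi fun _ : Fin k => volume)) :=
      (hmp.integrable_comp_emb hemb).mpr hIntpi
    have hsymm : ∀ (x : ℝ) (v : Fin k → ℝ), e.symm (x, v) = Fin.cons x v := by
      intro x v
      simp [he, MeasurableEquiv.piFinSuccAbove_symm_apply, Fin.insertNthEquiv_zero,
        Fin.consEquiv]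
    calc ∫ y : Fin (k+1) → ℝ, F y
        = ∫ y, F y ∂(Measure.pi fun _ => volume) := by rw [← MeasureTheory.volume_pi]
      _ = ∫ p : ℝ × (Fin k → ℝ), (F ∘ e.symm) p
            ∂((volume : Measure ℝ).prod (Measure.pi fun _ : Fin k => volume)) := key.symm
      _ = ∫ v : Fin k → ℝ, (∫ x : ℝ, (F ∘ e.symm) (x, v))
            ∂(Measure.pi fun _ : Fin k => volume) := integral_prod_symm _ hIntc
      _ = 0 := by
          have hv : ∀ v : Fin k → ℝ, (∫ x : ℝ, (F ∘ e.symm) (x, v)) = 0 := by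
            intro v
            have : ∀ x : ℝ, (F ∘ e.symm) (x, v) =
                g (Fin.cons ((x:ℂ) * Complex.I) (fun j => ((v j : ℂ)) * Complex.I)) := by
              intro x
              simp only [Function.comp_apply, hsymm, hF]
              rw [hcons]
            rw [integral_congr_ae (ae_of_all _ this)]
            exact inner0 v
          rw [integral_congr_ae (ae_of_all _ hv)]
          simp
  · exact integral_undef hInt

end ContourShiftAux

/-- Contour-shifting limit in the proof of Theorem 2.1 of Ólafsson–Pasquale: for `g`
holomorphic on `{λ : Re λ_j > -δ}` with the Hardy-type bound
`|g(λ)| ≤ K ∏_j (1+|λ_j|)^M e^{(A-π)|Im λ_j| + (R-P)Re λ_j}` (with `A < π`, `R < P`) on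
the closed right half-planes (covering all the contours and the imaginary axes), the
iterated clockwise integrals over the rectangles `C_{j,N}` (vertices `-iN`, `iN`,
`iN + (ρ_j+N+1/2)`, `-iN + (ρ_j+N+1/2)`) converge, as `N → ∞`, to the iterated integral
of `g` over `(iℝ)^l` (each axis oriented upwards, contributing a factor `i`). -/
theorem contour_shift_limit
    (l : ℕ) (hl : 0 < l) (M A R P δ K : ℝ) (hM : 0 ≤ M) (hA : A < Real.pi)
    (hRP : R < P) (hδ : 0 < δ)
    (ρ : Fin l → ℝ) (hρ : ∀ j, 0 < ρ j)
    (g : (Fin l → ℂ) → ℂ)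
    (hg : DifferentiableOn ℂ g {lam : Fin l → ℂ | ∀ j, -δ < (lam j).re})
    (hbound : ∀ lam : Fin l → ℂ, (∀ j, 0 ≤ (lam j).re) →
      ‖g lam‖ ≤ K * ∏ j, (1 + ‖lam j‖) ^ M *
        Real.exp ((A - Real.pi) * |(lam j).im| + (R - P) * (lam j).re)) :
    Filter.Tendsto
      (fun N : ℕ => (-1 : ℂ) ^ l *
        iterRect l g (fun j =>
          (-(N : ℂ) * Complex.I, ((ρ j + N + 1 / 2 : ℝ) : ℂ) + (N : ℂ) * Complex.I)))
      Filter.atTop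
      (nhds (Complex.I ^ l * ∫ y : Fin l → ℝ, g (fun j => (y j : ℂ) * Complex.I))) := by
  obtain ⟨k, rfl⟩ : ∃ k, l = k + 1 := ⟨l - 1, (Nat.succ_pred_eq_of_pos hl).symm⟩
  have hzero : ∀ N : ℕ,
      iterRect (k+1) g (fun j => (-(N : ℂ) * Complex.I,
        ((ρ j + N + 1 / 2 : ℝ) : ℂ) + (N : ℂ) * Complex.I)) = 0 := by
    intro N
    refine iterRect_eq_zero (δ := δ) k g _ hg (fun j => ?_) (fun j => ?_)
    · simp only [Complex.neg_re, Complex.mul_re, Complex.natCast_re, Complex.I_re,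
        Complex.natCast_im, Complex.I_im, mul_zero, mul_one, zero_mul, sub_zero, neg_zero,
        mul_comm, zero_sub, neg_neg]
      norm_num
      linarith
    · simp only [Complex.add_re, Complex.ofReal_re, Complex.mul_re, Complex.natCast_re,
        Complex.I_re, Complex.natCast_im, Complex.I_im, mul_zero, mul_one, zero_mul, sub_zero,
        add_zero, mul_comm]
      norm_num
      have h1 := hρ j
      have h2 : (0:ℝ) ≤ (N:ℝ) := Nat.cast_nonneg N
      linarith
  have hI := integral_multi_zero k M A R P δ K hM hA hRP hδ g hg hbound
  rw [hI, mul_zero]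
  have heq : (fun N : ℕ => (-1 : ℂ) ^ (k+1) *
      iterRect (k+1) g (fun j =>
        (-(N : ℂ) * Complex.I, ((ρ j + N + 1 / 2 : ℝ) : ℂ) + (N : ℂ) * Complex.I))) =
      fun _ => 0 := by
    funext N
    rw [hzero N, mul_zero]
  rw [heq]
  exact tendsto_const_nhds
end

section
/- Let $V' \subseteq \mathbb{C}^n$ be an open set and $H: V' \to \mathbb{C}$ holomorphic with $|H(\lambda)| \le C(1+\|\lambda\|)^s e^{R\|\mathrm{Im}\,\lambda\|}$ for all $\lambda \in V'$, where $C > 0$, $s > 0$, $R \in \mathbb{R}$. Let $\tau > 0$ and let $V$ be an open set such that the closed $\tau$-neighborhood $V_\tau = \{\nu : \exists \lambda \in V,\ \|\lambda - \nu\| \le \tau\}$ is contained in $V'$. Let $p$ be a polynomial such that $F = H/p$ extends holomorphically to $V'$. Then there is a constant $C_\tau > 0$ (depending on $C, R, s, \tau, p$) such that $|F(\lambda)| \le C_\tau(1+\|\lambda\|)^s e^{R\|\mathrm{Im}\,\lambda\|}$ for all $\lambda \in V$. -/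
open Complex MeasureTheory

open Polynomial in
private lemma coeff_finset_prod_top {ι : Type*} (s : Finset ι) (f : ι → Polynomial ℂ)
    (d : ι → ℕ) (h : ∀ i ∈ s, (f i).natDegree ≤ d i) :
    (∏ i ∈ s, f i).coeff (∑ i ∈ s, d i) = ∏ i ∈ s, (f i).coeff (d i) := by
  classical
  induction s using Finset.induction with
  | empty => simp
  | @insert a s ha ih =>
    rw [Finset.prod_insert ha, Finset.sum_insert ha, Finset.prod_insert ha,
      Polynomial.coeff_mul_add_eq_of_natDegree_le (h a (Finset.mem_insert_self a s))
        ((Polynomial.natDegree_prod_le s f).trans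
          (Finset.sum_le_sum fun i hi => h i (Finset.mem_insert_of_mem hi))),
      ih fun i hi => h i (Finset.mem_insert_of_mem hi)]

private lemma eval_aeval_line (n : ℕ) (p : MvPolynomial (Fin n) ℂ) (f : Fin n → Polynomial ℂ)
    (z : ℂ) :
    Polynomial.eval z (MvPolynomial.aeval f p) =
      MvPolynomial.eval (fun i => Polynomial.eval z (f i)) p := by
  induction p using MvPolynomial.induction_on with
  | C a => simp
  | add p q hp hq => simp [hp, hq]
  | mul_X p i hp => simp [hp]

open Polynomial MvPolynomial in
private lemma natDegree_aeval_line (n : ℕ) (p : MvPolynomial (Fin n) ℂ) (lam w : Fin n → ℂ) :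
    (MvPolynomial.aeval
        (fun i => Polynomial.C (lam i) + Polynomial.C (w i) * Polynomial.X) p).natDegree
      ≤ p.totalDegree := by
  classical
  set f : Fin n → Polynomial ℂ := fun i => Polynomial.C (lam i) + Polynomial.C (w i) * Polynomial.X
    with hf
  have hdeg1 : ∀ i, (f i).natDegree ≤ 1 := by
    intro i
    refine (Polynomial.natDegree_add_le _ _).trans ?_
    simp [Polynomial.natDegree_C_mul_le]
    exact Polynomial.natDegree_C_mul_le _ _ |>.trans (by simp)
  have key : MvPolynomial.aeval f p =
      ∑ u ∈ p.support, Polynomial.C (MvPolynomial.coeff u p) *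
        ∏ i ∈ u.support, (f i) ^ (u i) := by
    rw [MvPolynomial.aeval_def, MvPolynomial.eval₂_eq]; rfl
  rw [key]
  refine Polynomial.natDegree_sum_le_of_forall_le _ _ fun u hu => ?_
  refine (Polynomial.natDegree_C_mul_le _ _).trans ?_
  refine ((Polynomial.natDegree_prod_le _ _).trans ?_)
  have husum : ∑ i ∈ u.support, u i ≤ p.totalDegree := by
    simpa [Finsupp.sum] using MvPolynomial.le_totalDegree hu
  refine le_trans (Finset.sum_le_sum fun i _ => ?_) husum
  exact (Polynomial.natDegree_pow_le).trans (by simpa using Nat.mul_le_mul_left (u i) (hdeg1 i))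

open Polynomial MvPolynomial in
private lemma coeff_aeval_line (n : ℕ) (p : MvPolynomial (Fin n) ℂ) (lam w : Fin n → ℂ) :
    (MvPolynomial.aeval
        (fun i => Polynomial.C (lam i) + Polynomial.C (w i) * Polynomial.X) p).coeff
      p.totalDegree
    = MvPolynomial.eval w (MvPolynomial.homogeneousComponent p.totalDegree p) := by
  classical
  set d := p.totalDegree with hd
  set f : Fin n → Polynomial ℂ := fun i => Polynomial.C (lam i) + Polynomial.C (w i) * Polynomial.X
    with hf
  have hdeg1 : ∀ i, (f i).natDegree ≤ 1 := by
    intro i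
    refine (Polynomial.natDegree_add_le _ _).trans ?_
    simp [Polynomial.natDegree_C_mul_le]
    exact Polynomial.natDegree_C_mul_le _ _ |>.trans (by simp)
  have key : MvPolynomial.aeval f p =
      ∑ u ∈ p.support, Polynomial.C (MvPolynomial.coeff u p) *
        ∏ i ∈ u.support, (f i) ^ (u i) := by
    rw [MvPolynomial.aeval_def, MvPolynomial.eval₂_eq]
    rfl
  rw [key, Polynomial.finset_sum_coeff]
  rw [MvPolynomial.homogeneousComponent_apply, map_sum]
  rw [Finset.sum_filter]
  refine Finset.sum_congr rfl fun u hu => ?_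
  rw [Polynomial.coeff_C_mul]
  have husum : ∑ i ∈ u.support, u i ≤ d := by
    have := MvPolynomial.le_totalDegree hu
    simpa [Finsupp.sum] using this
  by_cases hcase : u.degree = d
  · rw [if_pos hcase]
    have hsum : ∑ i ∈ u.support, u i = d := by
      simpa [Finsupp.degree_apply] using hcase
    rw [← hsum, coeff_finset_prod_top _ _ _ (fun i _ => (Polynomial.natDegree_pow_le).trans
      (by simpa using Nat.mul_le_mul_left (u i) (hdeg1 i)))]
    rw [MvPolynomial.eval_monomial]
    congr 1
    rw [Finsupp.prod]
    refine Finset.prod_congr rfl fun i hi => ?_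
    have : ((f i) ^ (u i)).coeff (u i) = ((f i).coeff 1) ^ (u i) := by
      simpa using Polynomial.coeff_pow_of_natDegree_le (hdeg1 i) (m := u i)
    rw [this]
    simp [hf]
  · rw [if_neg hcase]
    have hlt : ∑ i ∈ u.support, u i < d := by
      refine lt_of_le_of_ne husum ?_
      simpa [Finsupp.degree_apply] using hcase
    rw [Polynomial.coeff_eq_zero_of_natDegree_lt, mul_zero]
    refine lt_of_le_of_lt ?_ hlt
    refine (Polynomial.natDegree_prod_le _ _).trans ?_
    refine Finset.sum_le_sum fun i _ => ?_
    exact (Polynomial.natDegree_pow_le).trans (by simpa using Nat.mul_le_mul_left (u i) (hdeg1 i))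

private lemma norm_multiset_prod' (t : Multiset ℂ) : ‖t.prod‖ = (t.map (fun z => ‖z‖)).prod := by
  induction t using Multiset.induction with
  | empty => simp
  | cons a t ih => simp [ih]

open Polynomial in
private lemma one_var_div_bound (g : ℂ → ℂ) (r : ℝ) (hr : 0 < r)
    (hg : DifferentiableOn ℂ g (Metric.closedBall 0 r)) (q : Polynomial ℂ) (M : ℝ)
    (hM : ∀ z : ℂ, ‖z‖ = r → ‖g z * q.eval z‖ ≤ M) :
    ‖g 0‖ * ‖q.leadingCoeff‖ * r ^ q.natDegree ≤ M := by
  have hMnn : 0 ≤ M := by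
    have := hM r (by simp [abs_of_pos hr])
    exact le_trans (norm_nonneg _) this
  rcases eq_or_ne q 0 with rfl | hq0
  · simpa using hMnn
  have hsplit : q.Splits := IsAlgClosed.splits q
  have hfact := hsplit.eq_prod_roots
  have hcard : q.roots.card = q.natDegree := Polynomial.splits_iff_card_roots.mp hsplit
  set m := q.natDegree with hm
  set h : ℂ → ℂ := fun z => g z * (q.leadingCoeff *
    (q.roots.map (fun a => ((r : ℂ))^2 - (starRingEnd ℂ) a * z)).prod) with hh
  have hdiff : DiffContOnCl ℂ h (Metric.ball 0 r) := by
    refine DifferentiableOn.diffContOnCl ?_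
    rw [closure_ball 0 hr.ne']
    refine hg.mul (DifferentiableOn.const_mul ?_ _)
    have hfn : (fun z : ℂ => (q.roots.map (fun a => ((r : ℂ))^2 - (starRingEnd ℂ) a * z)).prod)
        = fun z => Polynomial.eval z
            ((q.roots.map (fun a => Polynomial.C ((r:ℂ)^2)
              - Polynomial.C ((starRingEnd ℂ) a) * Polynomial.X)).prod) := by
      funext z
      rw [Polynomial.eval_multiset_prod, Multiset.map_map]
      simp [Function.comp]
    rw [hfn]
    exact (Polynomial.differentiable _).differentiableOn
  have hfr : ∀ z ∈ frontier (Metric.ball (0:ℂ) r), ‖h z‖ ≤ r ^ m * M := by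
    intro z hz
    rw [frontier_ball 0 hr.ne'] at hz
    have hzr : ‖z‖ = r := by simpa using hz
    have hzz : (r : ℂ)^2 = z * (starRingEnd ℂ) z := by
      rw [Complex.mul_conj, Complex.normSq_eq_norm_sq, hzr]
      push_cast; ring
    have hnormfac : ∀ a : ℂ, ‖(r : ℂ)^2 - (starRingEnd ℂ) a * z‖ = r * ‖z - a‖ := by
      intro a
      have he : (r : ℂ)^2 - (starRingEnd ℂ) a * z = z * (starRingEnd ℂ) (z - a) := by
        rw [hzz, map_sub]; ring
      rw [he, norm_mul, hzr, RCLike.norm_conj]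
    have hq : ‖q.eval z‖ = ‖q.leadingCoeff‖ * (q.roots.map (fun a => ‖z - a‖)).prod := by
      conv_lhs => rw [hfact]
      rw [Polynomial.eval_mul, Polynomial.eval_C, norm_mul, Polynomial.eval_multiset_prod,
        Multiset.map_map, norm_multiset_prod', Multiset.map_map]
      simp [Function.comp]
    have h1 : ‖h z‖ = r ^ m * ‖g z * q.eval z‖ := by
      rw [hh]
      simp only [norm_mul]
      rw [norm_multiset_prod', Multiset.map_map]
      have : (q.roots.map (fun a => ‖(r : ℂ)^2 - (starRingEnd ℂ) a * z‖)).prod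
          = r ^ m * (q.roots.map (fun a => ‖z - a‖)).prod := by
        simp only [hnormfac]
        rw [show (fun a : ℂ => r * ‖z - a‖) = fun i => (fun _ : ℂ => r) i * (fun b => ‖z - b‖) i
          from rfl, Multiset.prod_map_mul, Multiset.map_const', Multiset.prod_replicate, hcard]
      rw [hq]
      simp only [Function.comp]
      rw [this]
      ring
    rw [h1]
    exact mul_le_mul_of_nonneg_left (hM z hzr) (by positivity)
  have h0 : (0:ℂ) ∈ closure (Metric.ball (0:ℂ) r) := by
    rw [closure_ball 0 hr.ne']; simp [hr.le]
  have key := Complex.norm_le_of_forall_mem_frontier_norm_le Metric.isBounded_ball hdiff hfr h0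
  have h0v : ‖h 0‖ = ‖g 0‖ * ‖q.leadingCoeff‖ * (r^2) ^ m := by
    rw [hh]
    simp only [mul_zero, sub_zero, norm_mul]
    rw [norm_multiset_prod', Multiset.map_map]
    simp only [Function.comp]
    rw [Multiset.map_const', Multiset.prod_replicate, hcard]
    rw [norm_pow]
    simp [Complex.norm_of_nonneg (by positivity : (0:ℝ) ≤ r^2), abs_of_pos hr]
    ring
  rw [h0v] at key
  have hrm : (0:ℝ) < r ^ m := by positivity
  refine le_of_mul_le_mul_left ?_ hrm
  calc r ^ m * (‖g 0‖ * ‖q.leadingCoeff‖ * r ^ m)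
      = ‖g 0‖ * ‖q.leadingCoeff‖ * (r ^ 2) ^ m := by ring
    _ ≤ r ^ m * M := key

private lemma im_norm_le (n : ℕ) (v : Fin n → ℂ) :
    ‖(fun j => (v j).im : Fin n → ℝ)‖ ≤ ‖v‖ := by
  refine (pi_norm_le_iff_of_nonneg (norm_nonneg v)).mpr fun j => ?_
  calc ‖(v j).im‖ ≤ ‖v j‖ := by
        simpa using Complex.abs_im_le_norm (v j)
    _ ≤ ‖v‖ := norm_le_pi_norm v j

/-- Lemma 5.4 of Ólafsson–Pasquale (local Malgrange argument): if `H` is holomorphic on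
`V' ⊆ ℂⁿ` with `|H(λ)| ≤ C(1+‖λ‖)^s e^{R‖Im λ‖}`, `V` is a set whose closed
`τ`-neighborhood is contained in `V'`, and `p` is a nonzero polynomial such that
`F = H/p` extends holomorphically to `V'`, then `F` satisfies the same type of bound
on `V` with a constant `C_τ`. -/
theorem malgrange_division_estimate
    (n : ℕ) (V' V : Set (Fin n → ℂ)) (hV' : IsOpen V') (hV : IsOpen V)
    (H : (Fin n → ℂ) → ℂ) (hH : DifferentiableOn ℂ H V')
    (C s R τ : ℝ) (hC : 0 < C) (hs : 0 < s) (hτ : 0 < τ)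
    (hHbound : ∀ lam ∈ V', ‖H lam‖ ≤
      C * (1 + ‖lam‖) ^ s * Real.exp (R * ‖(fun j => (lam j).im : Fin n → ℝ)‖))
    (hVτ : {ν : Fin n → ℂ | ∃ lam ∈ V, ‖lam - ν‖ ≤ τ} ⊆ V')
    (p : MvPolynomial (Fin n) ℂ) (hp : p ≠ 0)
    (F : (Fin n → ℂ) → ℂ) (hF : DifferentiableOn ℂ F V')
    (hFp : ∀ lam ∈ V', F lam * MvPolynomial.eval lam p = H lam) :
    ∃ Cτ > 0, ∀ lam ∈ V, ‖F lam‖ ≤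
      Cτ * (1 + ‖lam‖) ^ s * Real.exp (R * ‖(fun j => (lam j).im : Fin n → ℝ)‖) := by
  classical
  have hVV' : V ⊆ V' := fun lam hl => hVτ ⟨lam, hl, by simp [hτ.le]⟩
  by_cases hd0 : p.totalDegree = 0
  · -- constant polynomial case
    have hsupp : ∀ u ∈ p.support, u = (0 : Fin n →₀ ℕ) := by
      intro u hu
      ext x
      exact (MvPolynomial.totalDegree_eq_zero_iff (Fin n) p).mp hd0 u hu x
    have hpc : p = MvPolynomial.C (MvPolynomial.coeff 0 p) := by
      ext u
      by_cases hu0 : u = 0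
      · simp [hu0]
      · rw [MvPolynomial.coeff_C, if_neg (Ne.symm hu0)]
        by_contra hne
        exact hu0 (hsupp u (by simpa using hne))
    set c : ℂ := MvPolynomial.coeff 0 p with hc
    have hcne : c ≠ 0 := fun h0 => hp (by rw [hpc, h0, map_zero])
    have hcpos : (0:ℝ) < ‖c‖ := norm_pos_iff.mpr hcne
    refine ⟨C / ‖c‖, by positivity, fun lam hlam => ?_⟩
    have heq : F lam * c = H lam := by
      have := hFp lam (hVV' hlam)
      rwa [hpc, MvPolynomial.eval_C] at this
    have hb := hHbound lam (hVV' hlam)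
    rw [← heq, norm_mul] at hb
    rw [div_mul_eq_mul_div, div_mul_eq_mul_div, le_div_iff₀ hcpos]
    exact hb
  · -- main case: positive total degree
    have hdpos : 0 < p.totalDegree := Nat.pos_of_ne_zero hd0
    set d := p.totalDegree with hd
    set P := MvPolynomial.homogeneousComponent d p with hP
    have hPne : P ≠ 0 := by
      obtain ⟨u, hu, hud⟩ := Finset.exists_mem_eq_sup p.support
        (MvPolynomial.support_nonempty.mpr hp) (fun u : Fin n →₀ ℕ => u.sum fun _ e => e)
      have hudeg : u.degree = d := by
        rw [hd, MvPolynomial.totalDegree, hud]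
        simp [Finsupp.degree_apply, Finsupp.sum]
      intro h0
      have hcoeff : MvPolynomial.coeff u P = MvPolynomial.coeff u p := by
        rw [hP, MvPolynomial.coeff_homogeneousComponent, if_pos hudeg]
      rw [h0] at hcoeff
      exact (MvPolynomial.mem_support_iff.mp hu) (by simpa using hcoeff.symm)
    obtain ⟨w, hwP⟩ : ∃ w : Fin n → ℂ, MvPolynomial.eval w P ≠ 0 := by
      by_contra hcon
      push_neg at hcon
      exact hPne (MvPolynomial.funext fun x => by rw [hcon x, map_zero])
    have hwne : w ≠ 0 := by
      rintro rfl
      apply hwP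
      have h1 : MvPolynomial.eval (0 : Fin n → ℂ) P = MvPolynomial.coeff 0 P := by
        rw [MvPolynomial.eval_zero]; rfl
      rw [h1, hP, MvPolynomial.coeff_homogeneousComponent, if_neg]
      simpa using hdpos.ne
    have hwnorm : (0:ℝ) < ‖w‖ := norm_pos_iff.mpr hwne
    set r : ℝ := τ / ‖w‖ with hr
    have hrpos : 0 < r := div_pos hτ hwnorm
    have hrw : r * ‖w‖ = τ := div_mul_cancel₀ τ hwnorm.ne'
    set c : ℂ := MvPolynomial.eval w P with hc
    have hcpos : (0:ℝ) < ‖c‖ := norm_pos_iff.mpr hwP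
    set K : ℝ := C * (1 + τ) ^ s * Real.exp (|R| * τ) with hK
    have hKpos : 0 < K := by positivity
    refine ⟨K / (‖c‖ * r ^ d), by positivity, fun lam hlam => ?_⟩
    set ν : ℂ → (Fin n → ℂ) := fun z => lam + z • w with hν
    have hνmem : ∀ z : ℂ, ‖z‖ ≤ r → ν z ∈ V' := by
      intro z hz
      refine hVτ ⟨lam, hlam, ?_⟩
      have he : lam - ν z = (-z) • w := by
        funext i
        simp only [hν, Pi.sub_apply, Pi.add_apply, Pi.smul_apply, smul_eq_mul]
        ring
      rw [he, norm_smul, norm_neg]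
      calc ‖z‖ * ‖w‖ ≤ r * ‖w‖ := mul_le_mul_of_nonneg_right hz hwnorm.le
        _ = τ := hrw
    have hν0 : ν 0 = lam := by
      funext i; simp [hν]
    set Q : Polynomial ℂ := MvPolynomial.aeval
      (fun i => Polynomial.C (lam i) + Polynomial.C (w i) * Polynomial.X) p with hQ
    have hQeval : ∀ z : ℂ, Polynomial.eval z Q = MvPolynomial.eval (ν z) p := by
      intro z
      rw [hQ, eval_aeval_line]
      have harg : (fun i => Polynomial.eval z
          (Polynomial.C (lam i) + Polynomial.C (w i) * Polynomial.X)) = ν z := by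
        funext i
        simp only [hν, Pi.add_apply, Pi.smul_apply, smul_eq_mul, Polynomial.eval_add,
          Polynomial.eval_mul, Polynomial.eval_C, Polynomial.eval_X]
        ring
      rw [harg]
    have hQd : Q.coeff d = c := by
      rw [hQ, coeff_aeval_line]
    have hQnat : Q.natDegree = d :=
      le_antisymm (natDegree_aeval_line n p lam w)
        (Polynomial.le_natDegree_of_ne_zero (by rw [hQd]; exact hwP))
    have hQlead : Q.leadingCoeff = c := by
      rw [Polynomial.leadingCoeff, hQnat, hQd]
    set g : ℂ → ℂ := fun z => F (ν z) with hg
    have hgdiff : DifferentiableOn ℂ g (Metric.closedBall 0 r) := by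
      intro z hz
      have hz' : ‖z‖ ≤ r := by simpa [Metric.mem_closedBall] using hz
      have h1 : DifferentiableAt ℂ F (ν z) :=
        hF.differentiableAt (hV'.mem_nhds (hνmem z hz'))
      have h2 : DifferentiableAt ℂ ν z := by
        exact (differentiableAt_const lam).add (differentiableAt_id.smul_const w)
      exact (h1.comp z h2).differentiableWithinAt
    set M : ℝ := K * ((1 + ‖lam‖) ^ s *
      Real.exp (R * ‖(fun j => (lam j).im : Fin n → ℝ)‖)) with hM
    have hMbound : ∀ z : ℂ, ‖z‖ = r → ‖g z * Q.eval z‖ ≤ M := by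
      intro z hz
      have hmem := hνmem z (le_of_eq hz)
      rw [hQeval z]
      have := hFp (ν z) hmem
      rw [hg]
      rw [this]
      refine (hHbound _ hmem).trans ?_
      have hsw : ‖z • w‖ = τ := by rw [norm_smul, hz, hrw]
      have hν_norm : ‖ν z‖ ≤ ‖lam‖ + τ := by
        rw [hν]
        refine (norm_add_le _ _).trans ?_
        rw [hsw]
      have h1s : (1 + ‖ν z‖) ^ s ≤ (1 + τ) ^ s * (1 + ‖lam‖) ^ s := by
        rw [← Real.mul_rpow (by positivity) (by positivity)]
        refine Real.rpow_le_rpow (by positivity) ?_ hs.le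
        nlinarith [norm_nonneg lam, hτ.le, hν_norm]
      have hIm : R * ‖(fun j => (ν z j).im : Fin n → ℝ)‖ ≤
          |R| * τ + R * ‖(fun j => (lam j).im : Fin n → ℝ)‖ := by
        have h3 : ‖(fun j => (ν z j).im : Fin n → ℝ) - (fun j => (lam j).im)‖ ≤ τ := by
          have he : (fun j => (ν z j).im : Fin n → ℝ) - (fun j => (lam j).im)
              = fun j => ((z • w) j).im := by
            funext j
            simp [hν, Complex.add_im]
          rw [he]
          exact (im_norm_le n (z • w)).trans (le_of_eq hsw)
        have h4 : |‖(fun j => (ν z j).im : Fin n → ℝ)‖ - ‖(fun j => (lam j).im : Fin n → ℝ)‖| ≤ τ :=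
          (abs_norm_sub_norm_le _ _).trans h3
        have h5 : R * (‖(fun j => (ν z j).im : Fin n → ℝ)‖
            - ‖(fun j => (lam j).im : Fin n → ℝ)‖) ≤ |R| * τ := by
          refine (le_abs_self _).trans ?_
          rw [abs_mul]
          exact mul_le_mul_of_nonneg_left h4 (abs_nonneg R)
        nlinarith [h5]
      calc C * (1 + ‖ν z‖) ^ s * Real.exp (R * ‖(fun j => (ν z j).im : Fin n → ℝ)‖)
          ≤ C * ((1 + τ) ^ s * (1 + ‖lam‖) ^ s) *
            Real.exp (|R| * τ + R * ‖(fun j => (lam j).im : Fin n → ℝ)‖) := by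
            refine mul_le_mul (mul_le_mul_of_nonneg_left h1s hC.le)
              (Real.exp_le_exp.mpr hIm) (by positivity) (by positivity)
        _ = M := by rw [hM, hK, Real.exp_add]; ring
    have main := one_var_div_bound g r hrpos hgdiff Q M hMbound
    rw [hQlead, hQnat] at main
    have hg0 : g 0 = F lam := by rw [hg]; simp only [hν0]
    rw [hg0] at main
    rw [div_mul_eq_mul_div, div_mul_eq_mul_div, le_div_iff₀ (by positivity)]
    calc ‖F lam‖ * (‖c‖ * r ^ d) = ‖F lam‖ * ‖c‖ * r ^ d := by ring
      _ ≤ M := main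
      _ = K * (1 + ‖lam‖) ^ s * Real.exp (R * ‖(fun j => (lam j).im : Fin n → ℝ)‖) := by
          rw [hM]; ring
end
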